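/- Let b ≥ 2 be a rational integer and let ξ = Σ_{k=0}^{∞} b^{−k!}. Then the set of limit points of the sequence of fractional parts {ξ b^n}, n = 1, 2, 3, …, is exactly the countable set {0, b^{−1}, b^{−2}, b^{−3}, …}. -/

import Mathlib

open Filter Topology

namespace LPAux

lemma Kf_ex (n : ℕ) : ∃ K : ℕ, n < K.factorial :=
  ⟨n + 1, Nat.lt_of_lt_of_le (Nat.lt_succ_self n) (Nat.self_le_factorial _)⟩

/-- least `K` with `n < K!` -/
noncomputable def Kf (n : ℕ) : ℕ := Nat.find (Kf_ex n)

lemma lt_Kf_fact (n : ℕ) : n < (Kf n).factorial := Nat.find_spec (Kf_ex n)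

lemma Kf_min (n : ℕ) {j : ℕ} (h : j < Kf n) : j.factorial ≤ n := by
  have := Nat.find_min (Kf_ex n) h
  omega

lemma two_le_Kf {n : ℕ} (hn : 1 ≤ n) : 2 ≤ Kf n := by
  by_contra h
  push_neg at h
  have h1 : (Kf n).factorial ≤ 1 := by
    interval_cases h2 : Kf n <;> simp [Nat.factorial]
  have := lt_Kf_fact n
  omega

lemma Kf_eq {n J : ℕ} (hJ : 1 ≤ J) (h1 : (J - 1).factorial ≤ n) (h2 : n < J.factorial) :
    Kf n = J := by
  refine le_antisymm (Nat.find_le h2) ?_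
  by_contra h
  push_neg at h
  have h4 : (Kf n).factorial ≤ (J - 1).factorial := Nat.factorial_le (by omega)
  have := lt_Kf_fact n
  omega

lemma Kf_tendsto : Tendsto Kf atTop atTop := by
  rw [tendsto_atTop_atTop]
  intro j
  refine ⟨j.factorial, fun n hn => ?_⟩
  by_contra h
  push_neg at h
  have : (Kf n).factorial ≤ j.factorial := Nat.factorial_le (by omega)
  have := lt_Kf_fact n
  omega

lemma fact_add_le (a : ℕ) (ha : 1 ≤ a) : ∀ j : ℕ, a.factorial + j ≤ (a + j).factorial := by
  intro j
  induction j with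
  | zero => simp
  | succ j ih =>
    have h1 : (a + (j + 1)).factorial = (a + j + 1) * (a + j).factorial := by
      rw [← Nat.add_assoc, Nat.factorial_succ]
    have h2 : 1 ≤ (a + j).factorial := Nat.factorial_pos _
    have h3 : 2 * (a + j).factorial ≤ (a + j + 1) * (a + j).factorial := by
      apply Nat.mul_le_mul_right; omega
    omega

lemma summable_pow_inv {b : ℕ} (hb : 2 ≤ b) {g : ℕ → ℕ} (hg : ∀ k, k ≤ g k) :
    Summable fun k : ℕ => ((b : ℝ) ^ g k)⁻¹ := by
  have hb1 : (1 : ℝ) < (b : ℕ) := by exact_mod_cast hb.trans_lt' one_lt_two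
  have hgeo : Summable fun k : ℕ => ((b : ℝ)⁻¹) ^ k :=
    summable_geometric_of_lt_one (by positivity) (inv_lt_one_of_one_lt₀ hb1)
  refine Summable.of_nonneg_of_le (fun k => by positivity) (fun k => ?_) hgeo
  rw [inv_pow]
  gcongr
  exacts [hb1.le, hg k]

lemma key {b : ℕ} (hb : 2 ≤ b) {ξ : ℝ}
    (hξ : ξ = ∑' k : ℕ, ((b : ℝ) ^ (Nat.factorial k))⁻¹) {n : ℕ} (hn : 1 ≤ n) :
    |Int.fract (ξ * (b : ℝ) ^ n) - ((b : ℝ) ^ ((Kf n).factorial - n))⁻¹| ≤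
      2 * (((b : ℝ) ^ (Kf n))⁻¹ * ((b : ℝ) ^ ((Kf n).factorial - n))⁻¹) := by
  have hB1 : (1 : ℝ) < (b : ℕ) := by exact_mod_cast hb.trans_lt' one_lt_two
  have hB0 : (0 : ℝ) < b := by positivity
  have hB2 : (2 : ℝ) ≤ b := by exact_mod_cast hb
  set B : ℝ := (b : ℝ) with hBdef
  set K : ℕ := Kf n with hK
  set m : ℕ := K.factorial - n with hm
  have hK2 : 2 ≤ K := two_le_Kf hn
  have hnK : n < K.factorial := lt_Kf_fact n
  have hm1 : 1 ≤ m := by omega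
  have hmn : m + n = K.factorial := by omega
  -- summability
  have hsum : Summable fun k : ℕ => (B ^ k.factorial)⁻¹ * B ^ n :=
    (summable_pow_inv hb fun k => Nat.self_le_factorial k).mul_right _
  have hTsum : Summable fun j : ℕ => (B ^ (j + K).factorial)⁻¹ * B ^ n :=
    ((summable_pow_inv hb (g := fun j => (j + K).factorial)
      fun j => le_trans (Nat.le_add_right j K) (Nat.self_le_factorial _)).mul_right _)
  set T : ℝ := ∑' j : ℕ, (B ^ (j + K).factorial)⁻¹ * B ^ n with hT
  -- split the series
  have hsplit : ξ * B ^ n = (∑ i ∈ Finset.range K, (B ^ i.factorial)⁻¹ * B ^ n) + T := by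
    rw [hξ, ← tsum_mul_right, ← Summable.sum_add_tsum_nat_add K hsum]
  -- the finite part is a natural number
  have hNat : (∑ i ∈ Finset.range K, (B ^ i.factorial)⁻¹ * B ^ n) =
      ((∑ i ∈ Finset.range K, b ^ (n - i.factorial) : ℕ) : ℝ) := by
    rw [Nat.cast_sum]
    refine Finset.sum_congr rfl fun i hi => ?_
    have hif : i.factorial ≤ n := Kf_min n (Finset.mem_range.mp hi)
    have : B ^ n = B ^ i.factorial * B ^ (n - i.factorial) := by
      rw [← pow_add]; congr 1; omega
    rw [this, Nat.cast_pow]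
    field_simp
    rfl
  -- bounds for T
  have hTpos : ∀ j : ℕ, 0 ≤ (B ^ (j + K).factorial)⁻¹ * B ^ n := fun j => by positivity
  have hterm0 : (B ^ (0 + K).factorial)⁻¹ * B ^ n = (B ^ m)⁻¹ := by
    have : B ^ K.factorial = B ^ m * B ^ n := by rw [← pow_add, hmn]
    rw [Nat.zero_add, this]
    field_simp
  have hlow : (B ^ m)⁻¹ ≤ T := by
    rw [← hterm0]
    exact Summable.le_tsum hTsum 0 fun j _ => hTpos j
  have hq : K.factorial + K ≤ (K + 1).factorial := by
    have h1 : (K + 1).factorial = (K + 1) * K.factorial := Nat.factorial_succ K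
    have h2 : 1 ≤ K.factorial := Nat.factorial_pos K
    have h3 : K * 1 ≤ K * K.factorial := Nat.mul_le_mul_left K h2
    nlinarith
  have hhigh : T ≤ (B ^ m)⁻¹ + 2 * ((B ^ K)⁻¹ * (B ^ m)⁻¹) := by
    have hs1 : T = (∑ i ∈ Finset.range 1, (B ^ (i + K).factorial)⁻¹ * B ^ n)
        + ∑' j : ℕ, (B ^ (j + 1 + K).factorial)⁻¹ * B ^ n := by
      rw [hT, ← Summable.sum_add_tsum_nat_add 1 hTsum]
    rw [hs1, Finset.sum_range_one, hterm0]
    gcongr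
    -- tail of the tail
    have hgeo : Summable fun j : ℕ => (B ^ (m + K))⁻¹ * (B⁻¹) ^ j :=
      (summable_geometric_of_lt_one (by positivity) (inv_lt_one_of_one_lt₀ hB1)).mul_left _
    have hle : ∀ j : ℕ, (B ^ (j + 1 + K).factorial)⁻¹ * B ^ n ≤ (B ^ (m + K))⁻¹ * (B⁻¹) ^ j := by
      intro j
      have hf : m + K + n + j ≤ (j + 1 + K).factorial := by
        have h1 := fact_add_le (K + 1) (by omega) j
        have h2 : (K + 1 + j).factorial = (j + 1 + K).factorial := by ring_nf
        omega
      have hBle : B ^ (m + K) * B ^ n * B ^ j ≤ B ^ (j + 1 + K).factorial := by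
        rw [← pow_add, ← pow_add]
        exact pow_le_pow_right₀ hB1.le hf
      calc (B ^ (j + 1 + K).factorial)⁻¹ * B ^ n
          ≤ (B ^ (m + K) * B ^ n * B ^ j)⁻¹ * B ^ n := by gcongr
        _ = (B ^ (m + K))⁻¹ * (B⁻¹) ^ j := by
            rw [inv_pow]
            field_simp
    calc (∑' j : ℕ, (B ^ (j + 1 + K).factorial)⁻¹ * B ^ n)
        ≤ ∑' j : ℕ, (B ^ (m + K))⁻¹ * (B⁻¹) ^ j := Summable.tsum_le_tsum hle (by
          exact (summable_nat_add_iff 1).mpr hTsum |>.congr fun j => by ring_nf) hgeo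
      _ = (B ^ (m + K))⁻¹ * (1 - B⁻¹)⁻¹ := by rw [tsum_mul_left, tsum_geometric_of_lt_one (by positivity) (inv_lt_one_of_one_lt₀ hB1)]
      _ ≤ (B ^ (m + K))⁻¹ * 2 := by
          have hBi : B⁻¹ ≤ 2⁻¹ := by
            rw [inv_le_inv₀ hB0 (by norm_num)]; exact hB2
          have h12 : (2:ℝ)⁻¹ ≤ 1 - B⁻¹ := by norm_num at hBi ⊢; linarith
          have h2 : (1 - B⁻¹)⁻¹ ≤ 2 := by
            calc (1 - B⁻¹)⁻¹ ≤ ((2:ℝ)⁻¹)⁻¹ := by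
                  apply inv_anti₀ (by norm_num) h12
              _ = 2 := by norm_num
          gcongr
      _ = 2 * ((B ^ K)⁻¹ * (B ^ m)⁻¹) := by rw [pow_add]; ring
  -- T is in [0, 1)
  have hBm2 : (2 : ℝ) ≤ B ^ m := by
    calc (2 : ℝ) = 2 ^ 1 := by norm_num
      _ ≤ B ^ 1 := by gcongr <;> norm_num
      _ ≤ B ^ m := pow_le_pow_right₀ hB1.le hm1
  have hBK4 : (4 : ℝ) ≤ B ^ K := by
    calc (4 : ℝ) = 2 ^ 2 := by norm_num
      _ ≤ B ^ 2 := by gcongr <;> norm_num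
      _ ≤ B ^ K := pow_le_pow_right₀ hB1.le hK2
  have hm2 : (B ^ m)⁻¹ ≤ 2⁻¹ := by
    rw [inv_le_inv₀ (by positivity) (by norm_num)]; exact hBm2
  have hK4 : (B ^ K)⁻¹ ≤ 4⁻¹ := by
    rw [inv_le_inv₀ (by positivity) (by norm_num)]; exact hBK4
  have hT1 : T < 1 := by
    have hmK0 : (0 : ℝ) < (B ^ m)⁻¹ := by positivity
    nlinarith [hhigh, hm2, hK4, hmK0]
  have hT0 : 0 ≤ T := le_trans (by positivity) hlow
  have hfr : Int.fract (ξ * B ^ n) = T := by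
    rw [hsplit, hNat, Int.fract_natCast_add, Int.fract_eq_self.mpr ⟨hT0, hT1⟩]
  rw [hfr, abs_le]
  constructor
  · have : (0:ℝ) ≤ 2 * ((B ^ K)⁻¹ * (B ^ m)⁻¹) := by positivity
    linarith
  · linarith

lemma m_pos {n : ℕ} (hn : 1 ≤ n) : 1 ≤ (Kf n).factorial - n := by
  have := lt_Kf_fact n; omega

lemma Kf_at {J m : ℕ} (hm : 1 ≤ m) (hmJ : m ≤ J) (hJ : 3 ≤ J) :
    Kf (J.factorial - m) = J ∧ J.factorial - (J.factorial - m) = m := by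
  obtain ⟨d, rfl⟩ : ∃ d, J = d + 3 := ⟨J - 3, by omega⟩
  have h5 : 2 ≤ (d + 2).factorial := by
    calc 2 = (2:ℕ).factorial := rfl
      _ ≤ (d + 2).factorial := Nat.factorial_le (by omega)
  have heq : (d + 3).factorial = (d + 3) * (d + 2).factorial := Nat.factorial_succ _
  have key2 : (d + 2).factorial + (d + 3) ≤ (d + 3).factorial := by nlinarith
  have hJle : d + 3 ≤ (d + 3).factorial := Nat.self_le_factorial _
  have hlow : (d + 3 - 1).factorial ≤ (d + 3).factorial - m := by
    simp only [show d + 3 - 1 = d + 2 by omega]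
    omega
  have hup : (d + 3).factorial - m < (d + 3).factorial := by omega
  exact ⟨Kf_eq (by omega) hlow hup, by omega⟩

end LPAux

open LPAux in
/-- Let `b ≥ 2` be an integer and `ξ = ∑_{k=0}^∞ b^{-k!}`. Then the set of limit points of
the sequence of fractional parts `{ξ bⁿ}`, `n = 1, 2, 3, …`, is exactly the countable set
`{0, b⁻¹, b⁻², b⁻³, …}`. -/
theorem limit_points_of_liouville (b : ℕ) (hb : 2 ≤ b) (ξ : ℝ)
    (hξ : ξ = ∑' k : ℕ, ((b : ℝ) ^ (Nat.factorial k))⁻¹) :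
    {x : ℝ | MapClusterPt x atTop (fun n : ℕ => Int.fract (ξ * (b : ℝ) ^ n))} =
      {0} ∪ {x : ℝ | ∃ m : ℕ, 1 ≤ m ∧ x = ((b : ℝ) ^ m)⁻¹} := by
  have hB1 : (1 : ℝ) < (b : ℕ) := by exact_mod_cast hb.trans_lt' one_lt_two
  set B : ℝ := (b : ℝ) with hBdef
  set u : ℕ → ℝ := fun n : ℕ => Int.fract (ξ * B ^ n) with hu
  have hinv0 : Tendsto (fun j : ℕ => (B ^ j)⁻¹) atTop (𝓝 0) :=
    tendsto_inv_atTop_zero.comp (tendsto_pow_atTop_atTop_of_one_lt hB1)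
  -- bound from `key`, simplified
  have hkey : ∀ n : ℕ, 1 ≤ n →
      |u n - (B ^ ((Kf n).factorial - n))⁻¹| ≤ 2 * (B ^ (Kf n))⁻¹ := by
    intro n hn
    refine (key hb hξ hn).trans ?_
    have h1 : (B ^ ((Kf n).factorial - n))⁻¹ ≤ 1 := by
      rw [inv_le_one_iff₀]; right; exact one_le_pow₀ hB1.le
    have h2 : (0:ℝ) ≤ (B ^ (Kf n))⁻¹ := by positivity
    nlinarith
  ext x
  simp only [Set.mem_setOf_eq, Set.mem_union, Set.mem_singleton_iff]
  constructor
  · -- every cluster point lies in the set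
    intro hx
    set S' : Set ℝ := insert 0 (Set.range fun j : ℕ => (B ^ (j + 1))⁻¹) with hS'
    have hS'closed : IsClosed S' := by
      refine (Filter.Tendsto.isCompact_insert_range ?_).isClosed
      exact hinv0.comp (tendsto_add_atTop_nat 1)
    have hxS' : x ∈ S' := by
      rw [← hS'closed.closure_eq]
      rw [Metric.mem_closure_iff]
      intro ε hε
      have hev : ∀ᶠ n : ℕ in atTop, 2 * (B ^ (Kf n))⁻¹ < ε / 2 ∧ 1 ≤ n := by
        have ht : Tendsto (fun n : ℕ => 2 * (B ^ (Kf n))⁻¹) atTop (𝓝 0) := by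
          have := (hinv0.comp Kf_tendsto).const_mul (2:ℝ)
          simpa using this
        have h1 := ht.eventually (eventually_lt_nhds (show (0:ℝ) < ε / 2 by positivity))
        exact h1.and (eventually_ge_atTop 1)
      have hfreq : ∃ᶠ n : ℕ in atTop, u n ∈ Metric.ball x (ε / 2) :=
        mapClusterPt_iff_frequently.mp hx _ (Metric.ball_mem_nhds x (by positivity))
      obtain ⟨n, hball, hsm, hn1⟩ := (hfreq.and_eventually hev).exists
      refine ⟨(B ^ ((Kf n).factorial - n))⁻¹, ?_, ?_⟩
      · refine Set.mem_insert_of_mem _ ⟨(Kf n).factorial - n - 1, ?_⟩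
        have hmp := m_pos hn1
        show (B ^ ((Kf n).factorial - n - 1 + 1))⁻¹ = (B ^ ((Kf n).factorial - n))⁻¹
        congr 2
        omega
      · have hd1 : dist x (u n) < ε / 2 := by
          rw [dist_comm]; exact hball
        have hd2 : dist (u n) ((B ^ ((Kf n).factorial - n))⁻¹) < ε / 2 := by
          rw [Real.dist_eq]
          exact lt_of_le_of_lt (hkey n hn1) hsm
        calc dist x ((B ^ ((Kf n).factorial - n))⁻¹)
            ≤ dist x (u n) + dist (u n) _ := dist_triangle _ _ _
          _ < ε / 2 + ε / 2 := by exact add_lt_add hd1 hd2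
          _ = ε := by ring
    rcases hxS' with h | ⟨j, hj⟩
    · exact Or.inl h
    · exact Or.inr ⟨j + 1, by omega, hj.symm⟩
  · -- every element of the set is a cluster point
    rintro (rfl | ⟨m, hm, rfl⟩)
    · -- 0 is a cluster point, along n = J! - J with J = j + 3
      set φ : ℕ → ℕ := fun j => (j + 3).factorial - (j + 3) with hφ
      have hφn : ∀ j, 1 ≤ φ j ∧ Kf (φ j) = j + 3 ∧
          (j + 3).factorial - φ j = j + 3 := by
        intro j
        obtain ⟨h1, h2⟩ := Kf_at (show 1 ≤ j + 3 by omega) (le_refl (j + 3)) (by omega)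
        have hlt : (j + 3) < (j + 3).factorial := (j + 3).lt_factorial_self (by omega)
        refine ⟨by simp only [hφ]; omega, h1, h2⟩
      have hφtend : Tendsto φ atTop atTop := by
        apply tendsto_atTop_mono (fun j => ?_) tendsto_id
        have h5 : 2 ≤ (j + 2).factorial := by
          calc 2 = (2:ℕ).factorial := rfl
            _ ≤ (j + 2).factorial := Nat.factorial_le (by omega)
        have heq : (j + 3).factorial = (j + 3) * (j + 2).factorial := Nat.factorial_succ _
        have h6 : 2 * (j + 3) ≤ (j + 3).factorial := by nlinarith
        simp only [hφ, id_eq]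
        omega
      refine MapClusterPt.of_comp hφtend ?_
      apply Filter.Tendsto.mapClusterPt
      have hbound : ∀ j : ℕ, ‖u (φ j) - 0‖ ≤ 3 * (B ^ (j + 3))⁻¹ := by
        intro j
        obtain ⟨h1, h2, h3⟩ := hφn j
        have hk := hkey (φ j) h1
        rw [h2, h3] at hk
        have habs : |u (φ j)| = u (φ j) := abs_of_nonneg (Int.fract_nonneg _)
        have h4 : (0:ℝ) ≤ (B ^ (j + 3))⁻¹ := by positivity
        rw [sub_zero, Real.norm_eq_abs, habs]
        rw [abs_le] at hk
        nlinarith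
      have h0 : Tendsto (fun j : ℕ => 3 * (B ^ (j + 3))⁻¹) atTop (𝓝 0) := by
        have := (hinv0.comp (tendsto_add_atTop_nat 3)).const_mul (3:ℝ)
        simpa using this
      have := squeeze_zero_norm hbound h0
      simpa [Function.comp_def] using this
    · -- (B ^ m)⁻¹ is a cluster point, along n = J! - m with J = j + m + 2
      set φ : ℕ → ℕ := fun j => (j + m + 2).factorial - m with hφ
      have hφn : ∀ j, 1 ≤ φ j ∧ Kf (φ j) = j + m + 2 ∧
          (j + m + 2).factorial - φ j = m := by
        intro j
        obtain ⟨h1, h2⟩ := Kf_at hm (show m ≤ j + m + 2 by omega) (by omega)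
        have hlt : (j + m + 2) < (j + m + 2).factorial := (j + m + 2).lt_factorial_self (by omega)
        refine ⟨by simp only [hφ]; omega, h1, h2⟩
      have hφtend : Tendsto φ atTop atTop := by
        apply tendsto_atTop_mono (fun j => ?_) tendsto_id
        have h := Nat.self_le_factorial (j + m + 2)
        simp only [hφ, id]
        omega
      refine MapClusterPt.of_comp hφtend ?_
      apply Filter.Tendsto.mapClusterPt
      have hbound : ∀ j : ℕ, ‖u (φ j) - (B ^ m)⁻¹‖ ≤ 2 * (B ^ (j + m + 2))⁻¹ := by
        intro j
        obtain ⟨h1, h2, h3⟩ := hφn j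
        have hk := hkey (φ j) h1
        rw [h2, h3] at hk
        exact hk
      have h0 : Tendsto (fun j : ℕ => 2 * (B ^ (j + m + 2))⁻¹) atTop (𝓝 0) := by
        have := (hinv0.comp (tendsto_add_atTop_nat (m + 2))).const_mul (2:ℝ)
        simpa [add_assoc, add_comm, add_left_comm] using this
      have hsq := squeeze_zero_norm hbound h0
      have := hsq.add_const ((B ^ m)⁻¹)
      simpa [Function.comp_def] using this
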